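/- Let X be a real normed vector space, let (m_n)_{n≥1} be vectors in X and (x'_n)_{n≥1} continuous linear functionals on X such that for every n, ‖m_n‖ = ‖x'_n‖ = x'_n(m_n) = 1 and x'_i(m_n) = 0 for all 1 ≤ i < n. Then for every n ≥ 1, all scalars a_1, …, a_n, and every 1 ≤ i ≤ n, the vector w = a_1 m_1 + ⋯ + a_n m_n satisfies |a_i| ≤ 2^{i−1} ‖w‖. -/
import Mathlib


/-- If `(m n)` and `(x' n)` form a biorthogonal system with
`‖m n‖ = ‖x' n‖ = x' n (m n) = 1` and `x' i (m n) = 0` for `i < n`, then the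
coefficients of any finite linear combination `w = ∑_{j<n} a j • m j` satisfy
`|a i| ≤ 2 ^ i * ‖w‖` for all `i < n`. (Indexing starts at `0`, so the paper's bound
`2 ^ (i - 1)` for `1 ≤ i ≤ n` becomes `2 ^ i` for `0 ≤ i < n`.) -/
theorem coeff_bound_of_biorthogonal {X : Type*} [NormedAddCommGroup X] [NormedSpace ℝ X]
    (m : ℕ → X) (x' : ℕ → (X →L[ℝ] ℝ))
    (hnorm : ∀ n, ‖m n‖ = 1 ∧ ‖x' n‖ = 1 ∧ x' n (m n) = 1)
    (horth : ∀ i n, i < n → x' i (m n) = 0)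
    (n : ℕ) (a : ℕ → ℝ) (i : ℕ) (hi : i < n) :
    |a i| ≤ 2 ^ i * ‖∑ j ∈ Finset.range n, a j • m j‖ := by
  induction i using Nat.strong_induction_on with
  | _ i IH =>
  set w := ∑ j ∈ Finset.range n, a j • m j with hw
  -- x' i applied to w
  have hxw : x' i w = ∑ j ∈ Finset.range n, a j * x' i (m j) := by
    simp [hw, map_sum, map_smul, smul_eq_mul]
  have hsub : ∑ j ∈ Finset.range n, a j * x' i (m j)
      = ∑ j ∈ Finset.range (i + 1), a j * x' i (m j) := by
    refine (Finset.sum_subset ?_ ?_).symm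
    · exact Finset.range_subset_range.2 hi
    · intro j hj hj'
      have : i < j := by
        simp only [Finset.mem_range, not_lt] at hj'
        omega
      rw [horth i j this, mul_zero]
  have hxi : x' i (m i) = 1 := (hnorm i).2.2
  have hkey : x' i w = (∑ j ∈ Finset.range i, a j * x' i (m j)) + a i := by
    rw [hxw, hsub, Finset.sum_range_succ, hxi, mul_one]
  have hbound : ∀ j, |x' i (m j)| ≤ 1 := by
    intro j
    calc |x' i (m j)| ≤ ‖x' i‖ * ‖m j‖ := (x' i).le_opNorm (m j)
    _ = 1 := by rw [(hnorm i).2.1, (hnorm j).1, mul_one]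
  have hxw_le : |x' i w| ≤ ‖w‖ := by
    calc |x' i w| ≤ ‖x' i‖ * ‖w‖ := (x' i).le_opNorm w
    _ = ‖w‖ := by rw [(hnorm i).2.1, one_mul]
  have hai : a i = x' i w - ∑ j ∈ Finset.range i, a j * x' i (m j) := by
    rw [hkey]; ring
  have hterm : ∀ j ∈ Finset.range i, |a j * x' i (m j)| ≤ 2 ^ j * ‖w‖ := by
    intro j hj
    have hji : j < i := Finset.mem_range.1 hj
    calc |a j * x' i (m j)| = |a j| * |x' i (m j)| := abs_mul _ _
    _ ≤ |a j| * 1 := by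
        exact mul_le_mul_of_nonneg_left (hbound j) (abs_nonneg _)
    _ = |a j| := mul_one _
    _ ≤ 2 ^ j * ‖w‖ := IH j hji (hji.trans hi)
  have hsum_le : |∑ j ∈ Finset.range i, a j * x' i (m j)|
      ≤ (2 ^ i - 1) * ‖w‖ := by
    calc |∑ j ∈ Finset.range i, a j * x' i (m j)|
        ≤ ∑ j ∈ Finset.range i, |a j * x' i (m j)| := Finset.abs_sum_le_sum_abs _ _
    _ ≤ ∑ j ∈ Finset.range i, 2 ^ j * ‖w‖ := Finset.sum_le_sum hterm
    _ = (∑ j ∈ Finset.range i, (2:ℝ) ^ j) * ‖w‖ := by rw [Finset.sum_mul]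
    _ = (2 ^ i - 1) * ‖w‖ := by rw [geom_sum_eq (by norm_num : (2:ℝ) ≠ 1)]; ring_nf
  calc |a i| ≤ |x' i w| + |∑ j ∈ Finset.range i, a j * x' i (m j)| := by
        rw [hai]; exact abs_sub _ _
  _ ≤ ‖w‖ + (2 ^ i - 1) * ‖w‖ := add_le_add hxw_le hsum_le
  _ = 2 ^ i * ‖w‖ := by ring
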